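/- Let τ₁(x,y) = x + iy + √3, r = √(x² + y²), and define G₁η = −(Dₓ² + (1/√3)Dₓ + (i/√3)Dᵧ) 1·η and N₁η = −(−Dₓ − iDᵧ + Dₓ³ − √3 i DₓDᵧ) 1·η. (a) If φ, η : ℝ² → ℂ are smooth and satisfy L₁φ = G₁η and M₁φ = N₁η, where L₁φ = (Dₓ² + (1/√3)Dₓ + (i/√3)Dᵧ) φ·τ₁ and M₁φ = (−Dₓ − iDᵧ + Dₓ³ − √3 i DₓDᵧ) φ·τ₁, then −4∂ₓ³η + 2√3 ∂ₓ²η = −M₁φ − √3 L₁φ + 3∂ₓ(L₁φ). (b) If η : ℝ² → ℂ is smooth with G₁η = 0 and N₁η = 0 on ℝ² and |η(x,y)| ≤ C(1 + r)^{5/2} for some constant C, then there exist constants c₁, c₂ ∈ ℂ such that η = c₁ + c₂ τ₁. -/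

import Mathlib

open Complex

/-- Hirota bilinear derivative `Dₓ^m Dᵧ^n f·g` for functions of `(x,y) ∈ ℝ²`. -/
noncomputable def hirota (m n : ℕ) (f g : ℝ × ℝ → ℂ) (p : ℝ × ℝ) : ℂ :=
  iteratedDeriv m (fun a =>
    iteratedDeriv n (fun b =>
      f (p.1 + a, p.2 + b) * g (p.1 - a, p.2 - b)) 0) 0

/-- `τ₁(x,y) = x + iy + √3`. -/
noncomputable def tau1 (p : ℝ × ℝ) : ℂ :=
  (p.1 : ℂ) + (p.2 : ℂ) * I + (Real.sqrt 3 : ℂ)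

/-- Partial derivative in x, for complex valued functions. -/
noncomputable def cdx (f : ℝ × ℝ → ℂ) (p : ℝ × ℝ) : ℂ :=
  deriv (fun x => f (x, p.2)) p.1

/-- `r = √(x² + y²)`. -/
noncomputable def rad (p : ℝ × ℝ) : ℝ := Real.sqrt (p.1 ^ 2 + p.2 ^ 2)

/-- `L₁φ = (Dₓ² + (1/√3)Dₓ + (i/√3)Dᵧ) φ·τ₁`. -/
noncomputable def L1 (φ : ℝ × ℝ → ℂ) (p : ℝ × ℝ) : ℂ :=
  hirota 2 0 φ tau1 p + (1 / (Real.sqrt 3 : ℂ)) * hirota 1 0 φ tau1 p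
    + (I / (Real.sqrt 3 : ℂ)) * hirota 0 1 φ tau1 p

/-- `M₁φ = (−Dₓ − iDᵧ + Dₓ³ − √3 i DₓDᵧ) φ·τ₁`. -/
noncomputable def M1 (φ : ℝ × ℝ → ℂ) (p : ℝ × ℝ) : ℂ :=
  -hirota 1 0 φ tau1 p - I * hirota 0 1 φ tau1 p + hirota 3 0 φ tau1 p
    - (Real.sqrt 3 : ℂ) * I * hirota 1 1 φ tau1 p

/-- `G₁η = −(Dₓ² + (1/√3)Dₓ + (i/√3)Dᵧ) 1·η`. -/
noncomputable def G1 (η : ℝ × ℝ → ℂ) (p : ℝ × ℝ) : ℂ :=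
  -(hirota 2 0 (fun _ => 1) η p + (1 / (Real.sqrt 3 : ℂ)) * hirota 1 0 (fun _ => 1) η p
    + (I / (Real.sqrt 3 : ℂ)) * hirota 0 1 (fun _ => 1) η p)

/-- `N₁η = −(−Dₓ − iDᵧ + Dₓ³ − √3 i DₓDᵧ) 1·η`. -/
noncomputable def N1 (η : ℝ × ℝ → ℂ) (p : ℝ × ℝ) : ℂ :=
  -(-hirota 1 0 (fun _ => 1) η p - I * hirota 0 1 (fun _ => 1) η p
    + hirota 3 0 (fun _ => 1) η p
    - (Real.sqrt 3 : ℂ) * I * hirota 1 1 (fun _ => 1) η p)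

/-! ### Auxiliary definitions and lemmas -/

/-- Partial derivative in y, for complex valued functions. -/
noncomputable def cdy (f : ℝ × ℝ → ℂ) (p : ℝ × ℝ) : ℂ :=
  deriv (fun y => f (p.1, y)) p.2

lemma one_le_top' : (1 : WithTop ℕ∞) ≤ ((⊤:ℕ∞) : WithTop ℕ∞) := by simp

lemma top_add_one_le' : ((⊤:ℕ∞) : WithTop ℕ∞) + 1 ≤ ((⊤:ℕ∞) : WithTop ℕ∞) := by simp

lemma lineX_diff {f : ℝ × ℝ → ℂ} (hf : ContDiff ℝ (⊤:ℕ∞) f) (y : ℝ) :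
    Differentiable ℝ (fun x => f (x, y)) :=
  (hf.differentiable (by simp)).comp (differentiable_id.prodMk (differentiable_const y))

lemma lineY_diff {f : ℝ × ℝ → ℂ} (hf : ContDiff ℝ (⊤:ℕ∞) f) (x : ℝ) :
    Differentiable ℝ (fun y => f (x, y)) :=
  (hf.differentiable (by simp)).comp ((differentiable_const x).prodMk differentiable_id)

lemma cdx_fderiv {f : ℝ × ℝ → ℂ} {p : ℝ × ℝ} (hf : DifferentiableAt ℝ f p) :
    cdx f p = fderiv ℝ f p (1, 0) := by
  have h1 : HasDerivAt (fun x : ℝ => (x, p.2)) ((1:ℝ), (0:ℝ)) p.1 :=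
    (hasDerivAt_id p.1).prodMk (hasDerivAt_const p.1 p.2)
  have := hf.hasFDerivAt.comp_hasDerivAt p.1 (by simpa using h1)
  simpa [cdx, Function.comp_def] using this.deriv

lemma cdy_fderiv {f : ℝ × ℝ → ℂ} {p : ℝ × ℝ} (hf : DifferentiableAt ℝ f p) :
    cdy f p = fderiv ℝ f p (0, 1) := by
  have h1 : HasDerivAt (fun y : ℝ => (p.1, y)) ((0:ℝ), (1:ℝ)) p.2 :=
    (hasDerivAt_const p.2 p.1).prodMk (hasDerivAt_id p.2)
  have := hf.hasFDerivAt.comp_hasDerivAt p.2 (by simpa using h1)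
  simpa [cdy, Function.comp_def] using this.deriv

lemma cdx_smooth {f : ℝ × ℝ → ℂ} (hf : ContDiff ℝ (⊤:ℕ∞) f) : ContDiff ℝ (⊤:ℕ∞) (cdx f) := by
  have h1 : ContDiff ℝ (⊤:ℕ∞) (fderiv ℝ f) := hf.fderiv_right top_add_one_le'
  have h2 : ContDiff ℝ (⊤:ℕ∞) (fun p => fderiv ℝ f p ((1:ℝ),(0:ℝ))) :=
    (ContinuousLinearMap.apply ℝ ℂ ((1:ℝ),(0:ℝ))).contDiff.comp h1
  have : cdx f = fun p => fderiv ℝ f p ((1:ℝ),(0:ℝ)) :=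
    funext fun p => cdx_fderiv (hf.differentiable (by simp) p)
  rw [this]; exact h2

lemma cdy_smooth {f : ℝ × ℝ → ℂ} (hf : ContDiff ℝ (⊤:ℕ∞) f) : ContDiff ℝ (⊤:ℕ∞) (cdy f) := by
  have h1 : ContDiff ℝ (⊤:ℕ∞) (fderiv ℝ f) := hf.fderiv_right top_add_one_le'
  have h2 : ContDiff ℝ (⊤:ℕ∞) (fun p => fderiv ℝ f p ((0:ℝ),(1:ℝ))) :=
    (ContinuousLinearMap.apply ℝ ℂ ((0:ℝ),(1:ℝ))).contDiff.comp h1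
  have : cdy f = fun p => fderiv ℝ f p ((0:ℝ),(1:ℝ)) :=
    funext fun p => cdy_fderiv (hf.differentiable (by simp) p)
  rw [this]; exact h2

lemma cdx_add {f g : ℝ × ℝ → ℂ} (hf : ContDiff ℝ (⊤:ℕ∞) f) (hg : ContDiff ℝ (⊤:ℕ∞) g)
    (p : ℝ × ℝ) : cdx (fun q => f q + g q) p = cdx f p + cdx g p :=
  deriv_add ((lineX_diff hf p.2) p.1) ((lineX_diff hg p.2) p.1)

lemma cdx_const_mul {f : ℝ × ℝ → ℂ} (hf : ContDiff ℝ (⊤:ℕ∞) f) (a : ℂ)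
    (p : ℝ × ℝ) : cdx (fun q => a * f q) p = a * cdx f p :=
  deriv_const_mul a ((lineX_diff hf p.2) p.1)

lemma cdx_sub {f g : ℝ × ℝ → ℂ} (hf : ContDiff ℝ (⊤:ℕ∞) f) (hg : ContDiff ℝ (⊤:ℕ∞) g)
    (p : ℝ × ℝ) : cdx (fun q => f q - g q) p = cdx f p - cdx g p :=
  deriv_sub ((lineX_diff hf p.2) p.1) ((lineX_diff hg p.2) p.1)

lemma cdy_sub {f g : ℝ × ℝ → ℂ} (hf : ContDiff ℝ (⊤:ℕ∞) f) (hg : ContDiff ℝ (⊤:ℕ∞) g)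
    (p : ℝ × ℝ) : cdy (fun q => f q - g q) p = cdy f p - cdy g p :=
  deriv_sub ((lineY_diff hf p.1) p.2) ((lineY_diff hg p.1) p.2)

lemma cdy_const_mul {f : ℝ × ℝ → ℂ} (hf : ContDiff ℝ (⊤:ℕ∞) f) (a : ℂ)
    (p : ℝ × ℝ) : cdy (fun q => a * f q) p = a * cdy f p :=
  deriv_const_mul a ((lineY_diff hf p.1) p.2)

lemma cdy_cdx_comm {f : ℝ × ℝ → ℂ} (hf : ContDiff ℝ (⊤:ℕ∞) f) (p : ℝ × ℝ) :
    cdy (cdx f) p = cdx (cdy f) p := by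
  have hdiff := hf.differentiable (by simp)
  have hf' : ContDiff ℝ (⊤:ℕ∞) (fderiv ℝ f) := hf.fderiv_right top_add_one_le'
  have hd : ∀ q, HasFDerivAt f (fderiv ℝ f q) q := fun q => (hdiff q).hasFDerivAt
  have hd2 : HasFDerivAt (fderiv ℝ f) (fderiv ℝ (fderiv ℝ f) p) p :=
    ((hf'.differentiable (by simp)) p).hasFDerivAt
  have symm := second_derivative_symmetric hd hd2
  set f'' := fderiv ℝ (fderiv ℝ f) p with hf''
  have e1 : cdx f = fun q => fderiv ℝ f q ((1:ℝ),(0:ℝ)) :=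
    funext fun q => cdx_fderiv (hdiff q)
  have e2 : cdy f = fun q => fderiv ℝ f q ((0:ℝ),(1:ℝ)) :=
    funext fun q => cdy_fderiv (hdiff q)
  have hax : HasFDerivAt (fun q => fderiv ℝ f q ((1:ℝ),(0:ℝ)))
      ((ContinuousLinearMap.apply ℝ ℂ ((1:ℝ),(0:ℝ))).comp f'') p :=
    (ContinuousLinearMap.apply ℝ ℂ ((1:ℝ),(0:ℝ))).hasFDerivAt.comp p hd2
  have hay : HasFDerivAt (fun q => fderiv ℝ f q ((0:ℝ),(1:ℝ)))
      ((ContinuousLinearMap.apply ℝ ℂ ((0:ℝ),(1:ℝ))).comp f'') p :=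
    (ContinuousLinearMap.apply ℝ ℂ ((0:ℝ),(1:ℝ))).hasFDerivAt.comp p hd2
  have c1 : cdy (cdx f) p = f'' ((0:ℝ),(1:ℝ)) ((1:ℝ),(0:ℝ)) := by
    rw [e1, cdy_fderiv hax.differentiableAt, hax.fderiv]; rfl
  have c2 : cdx (cdy f) p = f'' ((1:ℝ),(0:ℝ)) ((0:ℝ),(1:ℝ)) := by
    rw [e2, cdx_fderiv hay.differentiableAt, hay.fderiv]; rfl
  rw [c1, c2, symm]

lemma const_of_partials_zero {f : ℝ × ℝ → ℂ} (hf : ContDiff ℝ (⊤:ℕ∞) f)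
    (hx : ∀ p, cdx f p = 0) (hy : ∀ p, cdy f p = 0) (p : ℝ × ℝ) : f p = f (0,0) := by
  have hdiff := hf.differentiable (by simp)
  apply is_const_of_fderiv_eq_zero hdiff
  intro q
  have h1 : fderiv ℝ f q ((1:ℝ),(0:ℝ)) = 0 := by rw [← cdx_fderiv (hdiff q)]; exact hx q
  have h2 : fderiv ℝ f q ((0:ℝ),(1:ℝ)) = 0 := by rw [← cdy_fderiv (hdiff q)]; exact hy q
  ext
  · simpa using h1
  · simpa using h2

lemma itd2 (f : ℝ → ℂ) : iteratedDeriv 2 f = deriv (deriv f) := by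
  have h : (2:ℕ) = 1+1 := rfl
  rw [h, iteratedDeriv_succ', iteratedDeriv_one]

lemma itd3 (f : ℝ → ℂ) : iteratedDeriv 3 f = deriv (deriv (deriv f)) := by
  have h : (3:ℕ) = 2+1 := rfl
  rw [h, iteratedDeriv_succ', itd2]

lemma hirota10 (η : ℝ × ℝ → ℂ) (p : ℝ × ℝ) : hirota 1 0 (fun _ => 1) η p = -cdx η p := by
  simp only [hirota, iteratedDeriv_zero, iteratedDeriv_one, one_mul, sub_zero]
  have e1 : deriv (fun a => η (p.1 - a, p.2)) 0
      = -deriv (fun x => η (x, p.2)) (p.1 - 0) :=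
    deriv_comp_const_sub (fun x => η (x, p.2)) p.1 0
  rw [e1, sub_zero]; rfl

lemma hirota01 (η : ℝ × ℝ → ℂ) (p : ℝ × ℝ) : hirota 0 1 (fun _ => 1) η p = -cdy η p := by
  simp only [hirota, iteratedDeriv_zero, iteratedDeriv_one, one_mul, sub_zero]
  have e1 : deriv (fun b => η (p.1, p.2 - b)) 0
      = -deriv (fun y => η (p.1, y)) (p.2 - 0) :=
    deriv_comp_const_sub (fun y => η (p.1, y)) p.2 0
  rw [e1, sub_zero]; rfl

lemma hirota20 (η : ℝ × ℝ → ℂ) (p : ℝ × ℝ) : hirota 2 0 (fun _ => 1) η p = cdx (cdx η) p := by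
  simp only [hirota, iteratedDeriv_zero, one_mul, sub_zero]
  rw [itd2]
  have e1 : (deriv fun a => η (p.1 - a, p.2))
      = fun a => -deriv (fun x => η (x, p.2)) (p.1 - a) :=
    funext fun a => deriv_comp_const_sub (fun x => η (x, p.2)) p.1 a
  rw [e1]
  have e2 : deriv (fun a => -deriv (fun x => η (x, p.2)) (p.1 - a)) 0
      = deriv (deriv (fun x => η (x, p.2))) (p.1 - 0) := by
    rw [deriv.fun_neg, deriv_comp_const_sub (deriv (fun x => η (x, p.2))) p.1 0, neg_neg]
  rw [e2, sub_zero]; rfl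

lemma hirota30 (η : ℝ × ℝ → ℂ) (p : ℝ × ℝ) :
    hirota 3 0 (fun _ => 1) η p = -cdx (cdx (cdx η)) p := by
  simp only [hirota, iteratedDeriv_zero, one_mul, sub_zero]
  rw [itd3]
  have e1 : (deriv fun a => η (p.1 - a, p.2))
      = fun a => -deriv (fun x => η (x, p.2)) (p.1 - a) :=
    funext fun a => deriv_comp_const_sub (fun x => η (x, p.2)) p.1 a
  rw [e1]
  have e2 : (deriv fun a => -deriv (fun x => η (x, p.2)) (p.1 - a))
      = fun a => deriv (deriv (fun x => η (x, p.2))) (p.1 - a) := by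
    funext a
    rw [deriv.fun_neg, deriv_comp_const_sub (deriv (fun x => η (x, p.2))) p.1 a, neg_neg]
  rw [e2]
  have e3 : deriv (fun a => deriv (deriv (fun x => η (x, p.2))) (p.1 - a)) 0
      = -deriv (deriv (deriv (fun x => η (x, p.2)))) (p.1 - 0) :=
    deriv_comp_const_sub (deriv (deriv (fun x => η (x, p.2)))) p.1 0
  rw [e3, sub_zero]; rfl

lemma hirota11 (η : ℝ × ℝ → ℂ) (p : ℝ × ℝ) :
    hirota 1 1 (fun _ => 1) η p = cdx (cdy η) p := by
  simp only [hirota, iteratedDeriv_one, one_mul]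
  have e0 : (fun a => deriv (fun b => η (p.1 - a, p.2 - b)) 0)
      = fun a => -deriv (fun y => η (p.1 - a, y)) (p.2 - 0) :=
    funext fun a => deriv_comp_const_sub (fun y => η (p.1 - a, y)) p.2 0
  rw [e0]
  simp only [sub_zero]
  have e1 : deriv (fun a => -deriv (fun y => η (p.1 - a, y)) p.2) 0
      = -deriv (fun a => deriv (fun y => η (p.1 - a, y)) p.2) 0 := deriv.neg
  have e2 : deriv (fun a => deriv (fun y => η (p.1 - a, y)) p.2) 0
      = -deriv (fun x => deriv (fun y => η (x, y)) p.2) (p.1 - 0) :=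
    deriv_comp_const_sub (fun x => deriv (fun y => η (x, y)) p.2) p.1 0
  rw [e1, e2, sub_zero, neg_neg]; rfl

lemma G1_eq (η : ℝ × ℝ → ℂ) :
    G1 η = fun q => (-1 : ℂ) * cdx (cdx η) q
      + ((1 / (Real.sqrt 3 : ℂ)) * cdx η q + (I / (Real.sqrt 3 : ℂ)) * cdy η q) := by
  funext q
  rw [G1, hirota10, hirota01, hirota20]
  ring

lemma cdx_G1 (η : ℝ × ℝ → ℂ) (hη : ContDiff ℝ (⊤:ℕ∞) η) (p : ℝ × ℝ) :
    cdx (G1 η) p = -cdx (cdx (cdx η)) p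
      + (1 / (Real.sqrt 3 : ℂ)) * cdx (cdx η) p
      + (I / (Real.sqrt 3 : ℂ)) * cdx (cdy η) p := by
  rw [G1_eq η]
  have h1 : ContDiff ℝ (⊤:ℕ∞) (fun q => (-1 : ℂ) * cdx (cdx η) q) :=
    contDiff_const.mul (cdx_smooth (cdx_smooth hη))
  have h2 : ContDiff ℝ (⊤:ℕ∞) (fun q => (1 / (Real.sqrt 3 : ℂ)) * cdx η q) :=
    contDiff_const.mul (cdx_smooth hη)
  have h3 : ContDiff ℝ (⊤:ℕ∞) (fun q => (I / (Real.sqrt 3 : ℂ)) * cdy η q) :=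
    contDiff_const.mul (cdy_smooth hη)
  rw [cdx_add h1 (h2.add h3), cdx_add h2 h3, cdx_const_mul (cdx_smooth (cdx_smooth hη)),
    cdx_const_mul (cdx_smooth hη), cdx_const_mul (cdy_smooth hη)]
  ring

lemma ode_exp {g : ℝ → ℂ} (hg : Differentiable ℝ g) (c : ℂ)
    (h : ∀ x, deriv g x = c * g x) (x : ℝ) : g x = g 0 * Complex.exp (c * x) := by
  set h' : ℝ → ℂ := fun x => g x * Complex.exp (-c * x) with hh'
  have hder : ∀ t, HasDerivAt h' 0 t := by
    intro t
    have h1 : HasDerivAt g (c * g t) t := by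
      have := (hg t).hasDerivAt
      rwa [h t] at this
    have h2 : HasDerivAt (fun s : ℝ => Complex.exp (-c * s)) (-c * Complex.exp (-c * t)) t := by
      have hid : HasDerivAt (fun s : ℝ => -c * (s : ℂ)) (-c) t := by
        simpa using (Complex.ofRealCLM.hasDerivAt (x := t)).const_mul (-c)
      simpa [mul_comm] using hid.cexp
    have := h1.mul h2
    refine this.congr_deriv ?_
    ring
  have hconst : ∀ t, h' t = h' 0 :=
    fun t => is_const_of_deriv_eq_zero (fun s => (hder s).differentiableAt)
      (fun s => (hder s).deriv) t 0
  have := hconst x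
  simp only [hh'] at this
  have hne : Complex.exp (-c * x) ≠ 0 := Complex.exp_ne_zero _
  field_simp at this
  have e : Complex.exp (c * x) * Complex.exp (-(c * x)) = 1 := by rw [← Complex.exp_add]; simp
  simp at this
  linear_combination Complex.exp (c * x) * this - g x * e

open Filter in
lemma affine_rep {u : ℝ → ℂ} (hu : Differentiable ℝ u) (hu' : Differentiable ℝ (deriv u))
    (c c0 : ℂ) (hc : c ≠ 0) (h2 : ∀ x, deriv (deriv u) x = c0 * Complex.exp (c * x)) :
    ∃ A B : ℂ, ∀ x : ℝ, u x = A + B * x + (c0 / (c * c)) * Complex.exp (c * x) := by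
  set γ := c0 / (c * c) with hγ
  have hexp : ∀ x : ℝ, HasDerivAt (fun s : ℝ => Complex.exp (c * s))
      (c * Complex.exp (c * x)) x := by
    intro x
    have hid : HasDerivAt (fun s : ℝ => c * (s : ℂ)) c x := by
      simpa using (Complex.ofRealCLM.hasDerivAt (x := x)).const_mul c
    simpa [mul_comm] using hid.cexp
  set w : ℝ → ℂ := fun x => u x - γ * Complex.exp (c * x) with hw
  have hw1 : ∀ x, HasDerivAt w (deriv u x - γ * (c * Complex.exp (c * x))) x :=
    fun x => (hu x).hasDerivAt.sub ((hexp x).const_mul γ)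
  have hderivw : deriv w = fun x => deriv u x - γ * (c * Complex.exp (c * x)) :=
    funext fun x => (hw1 x).deriv
  have hw2 : ∀ x, HasDerivAt (deriv w) 0 x := by
    intro x
    rw [hderivw]
    have := (hu' x).hasDerivAt.sub (((hexp x).const_mul c).const_mul γ)
    refine this.congr_deriv ?_
    rw [h2 x, hγ]
    field_simp
    ring
  have hBconst : ∀ x, deriv w x = deriv w 0 :=
    fun x => is_const_of_deriv_eq_zero (fun s => (hw2 s).differentiableAt)
      (fun s => (hw2 s).deriv) x 0
  set B := deriv w 0 with hB
  set v : ℝ → ℂ := fun x => w x - B * x with hv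
  have hv1 : ∀ x, HasDerivAt v 0 x := by
    intro x
    have h1 : HasDerivAt (fun s : ℝ => B * (s : ℂ)) B x := by
      simpa using (Complex.ofRealCLM.hasDerivAt (x := x)).const_mul B
    have := ((hw1 x).sub h1)
    rw [← (hw1 x).deriv] at this
    rw [hBconst x] at this
    simp at this
    exact this
  have hvconst : ∀ x, v x = v 0 :=
    fun x => is_const_of_deriv_eq_zero (fun s => (hv1 s).differentiableAt)
      (fun s => (hv1 s).deriv) x 0
  refine ⟨v 0, B, fun x => ?_⟩
  have := hvconst x
  simp only [hv, hw] at this ⊢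
  linear_combination this

open Filter in
lemma tendsto_cexp_neg (lr : ℝ) (hlr : 0 < lr) :
    Tendsto (fun x : ℝ => Complex.exp (-(lr : ℂ) * x)) atTop (nhds 0) := by
  have hre : ∀ x : ℝ, ‖Complex.exp (-(lr : ℂ) * x)‖ = Real.exp (-(lr * x)) := by
    intro x
    rw [Complex.norm_exp]
    norm_num
  apply squeeze_zero_norm (fun x => (hre x).le)
  have base := tendsto_rpow_mul_exp_neg_mul_atTop_nhds_zero 0 lr hlr
  have : (fun x : ℝ => x ^ (0:ℝ) * Real.exp (-lr * x)) =ᶠ[atTop]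
      fun x => Real.exp (-(lr * x)) := by
    filter_upwards [eventually_gt_atTop 0] with x hx
    rw [Real.rpow_zero, one_mul, neg_mul]
  exact base.congr' this

open Filter in
lemma tendsto_x_cexp_neg (lr : ℝ) (hlr : 0 < lr) :
    Tendsto (fun x : ℝ => (x : ℂ) * Complex.exp (-(lr : ℂ) * x)) atTop (nhds 0) := by
  have base := tendsto_rpow_mul_exp_neg_mul_atTop_nhds_zero 1 lr hlr
  apply squeeze_zero_norm' (a := fun x : ℝ => x ^ (1:ℝ) * Real.exp (-lr * x)) _ base
  filter_upwards [eventually_ge_atTop (0:ℝ)] with x hx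
  rw [norm_mul, Complex.norm_exp, Complex.norm_real, Real.norm_eq_abs,
    _root_.abs_of_nonneg hx, Real.rpow_one]
  have : (-(lr:ℂ) * x).re = -lr * x := by norm_num
  rw [this]

open Filter in
lemma tendsto_poly_cexp_neg (lr : ℝ) (hlr : 0 < lr) (C M : ℝ) :
    Tendsto (fun x : ℝ => C * (x + M) ^ ((5:ℝ)/2) * Real.exp (-lr * x)) atTop (nhds 0) := by
  have base := tendsto_rpow_mul_exp_neg_mul_atTop_nhds_zero ((5:ℝ)/2) lr hlr
  have hshift : Tendsto (fun x : ℝ => x + M) atTop atTop :=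
    tendsto_atTop_add_const_right atTop M tendsto_id
  have comp := base.comp hshift
  have comp2 := (comp.const_mul (C * Real.exp (lr * M)))
  rw [mul_zero] at comp2
  apply comp2.congr
  intro x
  simp only [Function.comp]
  rw [show -lr * (x + M) = -lr * x + -(lr * M) by ring, Real.exp_add]
  rw [Real.exp_neg]
  field_simp

open Filter in
lemma gamma_zero (A B γ : ℂ) (lr : ℝ) (hlr : 0 < lr) (C M : ℝ)
    (hbound : ∀ x : ℝ, 0 ≤ x →
      ‖A + B * x + γ * Complex.exp ((lr : ℂ) * x)‖ ≤ C * (x + M) ^ ((5:ℝ)/2)) :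
    γ = 0 := by
  set F : ℝ → ℂ := fun x =>
    (A + B * x + γ * Complex.exp ((lr : ℂ) * x)) * Complex.exp (-(lr : ℂ) * x) with hF
  have T1 : Tendsto F atTop (nhds γ) := by
    have e : F = fun x : ℝ => A * Complex.exp (-(lr : ℂ) * x)
        + B * ((x : ℂ) * Complex.exp (-(lr : ℂ) * x)) + γ := by
      funext x
      have h1 : Complex.exp ((lr : ℂ) * x) * Complex.exp (-(lr : ℂ) * x) = 1 := by
        rw [← Complex.exp_add]; norm_num
      simp only [hF]
      linear_combination γ * h1
    rw [e]
    have := (((tendsto_cexp_neg lr hlr).const_mul A).add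
      ((tendsto_x_cexp_neg lr hlr).const_mul B)).add (tendsto_const_nhds (x := γ))
    simpa using this
  have T2 : Tendsto F atTop (nhds 0) := by
    apply squeeze_zero_norm' (a := fun x : ℝ => C * (x + M) ^ ((5:ℝ)/2) * Real.exp (-lr * x))
      _ (tendsto_poly_cexp_neg lr hlr C M)
    filter_upwards [eventually_ge_atTop (0:ℝ)] with x hx
    have hnorm : ‖F x‖ = ‖A + B * x + γ * Complex.exp ((lr : ℂ) * x)‖ * Real.exp (-lr * x) := by
      rw [hF]
      rw [norm_mul, Complex.norm_exp]
      congr 2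
      norm_num
    rw [hnorm]
    exact mul_le_mul_of_nonneg_right (hbound x hx) (Real.exp_nonneg _)
  exact tendsto_nhds_unique T1 T2

lemma tau1_smooth : ContDiff ℝ (⊤:ℕ∞) tau1 := by
  have h1 : ContDiff ℝ (⊤:ℕ∞) (fun p : ℝ × ℝ => ((p.1 : ℂ))) :=
    Complex.ofRealCLM.contDiff.comp contDiff_fst
  have h2 : ContDiff ℝ (⊤:ℕ∞) (fun p : ℝ × ℝ => ((p.2 : ℂ))) :=
    Complex.ofRealCLM.contDiff.comp contDiff_snd
  exact (h1.add (h2.mul contDiff_const)).add contDiff_const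

lemma cdx_tau1 (p : ℝ × ℝ) : cdx tau1 p = 1 := by
  have e : (fun x : ℝ => tau1 (x, p.2))
      = fun x : ℝ => (x : ℂ) + ((p.2 : ℂ) * I + (Real.sqrt 3 : ℂ)) := by
    funext x; simp [tau1]; ring
  have h1 : HasDerivAt (fun x : ℝ => (x : ℂ)) 1 p.1 := by
    simpa using (hasDerivAt_id p.1).ofReal_comp
  have := (h1.add_const ((p.2 : ℂ) * I + (Real.sqrt 3 : ℂ))).deriv
  rw [cdx, e, this]

lemma cdy_tau1 (p : ℝ × ℝ) : cdy tau1 p = I := by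
  have e : (fun y : ℝ => tau1 (p.1, y))
      = fun y : ℝ => (y : ℂ) * I + ((p.1 : ℂ) + (Real.sqrt 3 : ℂ)) := by
    funext y; simp [tau1]; ring
  have h1 : HasDerivAt (fun y : ℝ => (y : ℂ)) 1 p.2 := by
    simpa using (hasDerivAt_id p.2).ofReal_comp
  have := ((h1.mul_const I).add_const ((p.1 : ℂ) + (Real.sqrt 3 : ℂ))).deriv
  rw [cdy, e, this, one_mul]

/-- (a) Elimination identity for the linearized Bäcklund system between `τ₀ = 1`
and `τ₁`; (b) polynomially bounded solutions of the homogeneous system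
`G₁η = N₁η = 0` are exactly the linear combinations of `1` and `τ₁`. -/
theorem reverse_backlund_tau0_tau1 :
    (∀ φ η : ℝ × ℝ → ℂ, ContDiff ℝ (⊤ : ℕ∞) φ → ContDiff ℝ (⊤ : ℕ∞) η →
      (∀ p : ℝ × ℝ, L1 φ p = G1 η p) → (∀ p : ℝ × ℝ, M1 φ p = N1 η p) →
      ∀ p : ℝ × ℝ,
        -4 * cdx (cdx (cdx η)) p + 2 * (Real.sqrt 3 : ℂ) * cdx (cdx η) p
          = -M1 φ p - (Real.sqrt 3 : ℂ) * L1 φ p + 3 * cdx (fun q => L1 φ q) p) ∧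
    (∀ η : ℝ × ℝ → ℂ, ContDiff ℝ (⊤ : ℕ∞) η →
      (∀ p : ℝ × ℝ, G1 η p = 0) → (∀ p : ℝ × ℝ, N1 η p = 0) →
      (∃ C : ℝ, ∀ p : ℝ × ℝ, ‖η p‖ ≤ C * (1 + rad p) ^ ((5 : ℝ) / 2)) →
      ∃ c₁ c₂ : ℂ, ∀ p : ℝ × ℝ, η p = c₁ + c₂ * tau1 p) := by
  have hs0 : (Real.sqrt 3 : ℂ) ≠ 0 := by
    simp only [ne_eq, ofReal_eq_zero]
    positivity
  have hs2 : (Real.sqrt 3 : ℂ) * (Real.sqrt 3 : ℂ) = 3 := by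
    rw [← ofReal_mul]
    norm_num [Real.mul_self_sqrt]
  constructor
  · -- part (a)
    intro φ η hφ hη hL hM p
    have hLfun : (fun q => L1 φ q) = G1 η := funext fun q => hL q
    rw [hM p, hL p, hLfun]
    rw [cdx_G1 η hη, N1, G1, hirota10, hirota01, hirota20, hirota30, hirota11]
    field_simp
    ring_nf
    linear_combination (cdx (cdx η) p + cdx (cdy η) p * I) * hs2
  · -- part (b)
    intro η hη hG hN hbd
    obtain ⟨C, hC⟩ := hbd
    have hf1 : ContDiff ℝ (⊤:ℕ∞) (cdx η) := cdx_smooth hη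
    have hf2 : ContDiff ℝ (⊤:ℕ∞) (cdx (cdx η)) := cdx_smooth hf1
    have hfy : ContDiff ℝ (⊤:ℕ∞) (cdy η) := cdy_smooth hη
    -- the two scalar PDEs
    have E1 : ∀ p, (Real.sqrt 3 : ℂ) * cdx (cdx η) p = cdx η p + I * cdy η p := by
      intro p
      have h := hG p
      rw [G1, hirota10, hirota01, hirota20] at h
      field_simp at h
      linear_combination -h
    have E2 : ∀ p, cdx η p + I * cdy η p
        = cdx (cdx (cdx η)) p + (Real.sqrt 3 : ℂ) * I * cdx (cdy η) p := by
      intro p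
      have h := hN p
      rw [N1, hirota10, hirota01, hirota30, hirota11] at h
      linear_combination -h
    -- differentiate E1 in x
    have D1 : ∀ p, (Real.sqrt 3 : ℂ) * cdx (cdx (cdx η)) p
        = cdx (cdx η) p + I * cdx (cdy η) p := by
      intro p
      have hfun : (fun q => (Real.sqrt 3 : ℂ) * cdx (cdx η) q)
          = fun q => cdx η q + I * cdy η q := funext E1
      have l := cdx_const_mul hf2 (Real.sqrt 3 : ℂ) p
      rw [hfun, cdx_add hf1 (contDiff_const.mul hfy) p, cdx_const_mul hfy I p] at l
      exact l.symm
    have key : ∀ p, cdx (cdx (cdx η)) p = ((Real.sqrt 3 : ℂ)/2) * cdx (cdx η) p := by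
      intro p
      have d2 : (Real.sqrt 3 : ℂ) * cdx (cdx η) p
          = cdx (cdx (cdx η)) p + (Real.sqrt 3 : ℂ) * I * cdx (cdy η) p :=
        (E1 p).trans (E2 p)
      linear_combination ((Real.sqrt 3 : ℂ) * D1 p - d2) / 4
        - cdx (cdx (cdx η)) p / 4 * hs2
    -- pass to the real exponential rate
    set lr : ℝ := Real.sqrt 3 / 2 with hlrdef
    have hlr : 0 < lr := by
      rw [hlrdef]; positivity
    have hcoe : ((Real.sqrt 3 : ℂ)/2) = (lr : ℂ) := by
      rw [hlrdef]; push_cast; ring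
    have hlrne : (lr : ℂ) ≠ 0 := by
      simp only [ne_eq, ofReal_eq_zero]
      exact ne_of_gt hlr
    -- along each horizontal line, second derivative vanishes
    have hf2zero : ∀ p : ℝ × ℝ, cdx (cdx η) p = 0 := by
      intro p
      obtain ⟨x₀, y⟩ := p
      have hgdiff : Differentiable ℝ (fun x => cdx (cdx η) (x, y)) := lineX_diff hf2 y
      have hgd : ∀ x, deriv (fun x' => cdx (cdx η) (x', y)) x
          = (lr : ℂ) * cdx (cdx η) (x, y) := by
        intro x
        have e : deriv (fun x' => cdx (cdx η) (x', y)) x = cdx (cdx (cdx η)) (x, y) := rfl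
        rw [e, key (x, y), hcoe]
      have hrep : ∀ x : ℝ, cdx (cdx η) (x, y)
          = cdx (cdx η) (0, y) * Complex.exp ((lr : ℂ) * x) :=
        ode_exp hgdiff (lr : ℂ) hgd
      -- reconstruct η along the line
      have hudiff : Differentiable ℝ (fun x => η (x, y)) := lineX_diff hη y
      have hu'eq : deriv (fun x => η (x, y)) = fun x => cdx η (x, y) := funext fun x => rfl
      have hu'diff : Differentiable ℝ (deriv (fun x => η (x, y))) := by
        rw [hu'eq]; exact lineX_diff hf1 y
      have huxx : ∀ x, deriv (deriv (fun x' => η (x', y))) x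
          = cdx (cdx η) (0, y) * Complex.exp ((lr : ℂ) * x) := by
        intro x
        have e : deriv (deriv (fun x' => η (x', y))) x = cdx (cdx η) (x, y) := by
          rw [hu'eq]; exact rfl
        rw [e]
        exact hrep x
      obtain ⟨A, B, hAB⟩ := affine_rep hudiff hu'diff (lr : ℂ) (cdx (cdx η) (0, y)) hlrne huxx
      set γ := cdx (cdx η) (0, y) / ((lr : ℂ) * (lr : ℂ)) with hγdef
      set C' := max C 0 with hC'def
      have hγ0 : γ = 0 := by
        apply gamma_zero A B γ lr hlr C' (1 + |y|)
        intro x hx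
        rw [← hAB x]
        have b1 : ‖η (x, y)‖ ≤ C * (1 + rad (x, y)) ^ ((5:ℝ)/2) := hC (x, y)
        have hradnn : 0 ≤ rad (x, y) := Real.sqrt_nonneg _
        have hradle : rad (x, y) ≤ |x| + |y| := by
          rw [rad]
          have h1 : (x : ℝ)^2 + y^2 ≤ (|x| + |y|)^2 := by
            nlinarith [_root_.sq_abs x, _root_.sq_abs y, mul_nonneg (abs_nonneg x) (abs_nonneg y)]
          calc Real.sqrt (x^2 + y^2) ≤ Real.sqrt ((|x| + |y|)^2) := Real.sqrt_le_sqrt h1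
            _ = |x| + |y| := Real.sqrt_sq (by positivity)
        have hble : (1 + rad (x, y)) ^ ((5:ℝ)/2) ≤ (x + (1 + |y|)) ^ ((5:ℝ)/2) := by
          apply Real.rpow_le_rpow (by linarith)
          · rw [_root_.abs_of_nonneg hx] at hradle
            linarith
          · norm_num
        calc ‖η (x, y)‖ ≤ C * (1 + rad (x, y)) ^ ((5:ℝ)/2) := b1
          _ ≤ C' * (x + (1 + |y|)) ^ ((5:ℝ)/2) := by
              apply mul_le_mul (le_max_left C 0) hble (by positivity) (le_max_right C 0)
      have hc0 : cdx (cdx η) (0, y) = 0 := by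
        have := hγ0
        rw [hγdef, div_eq_zero_iff] at this
        rcases this with h | h
        · exact h
        · exact absurd h (by simpa using hlrne)
      rw [hrep x₀, hc0, zero_mul]
    -- consequences
    have hf3zero : ∀ p, cdx (cdx (cdx η)) p = 0 := by
      intro p; rw [key p, hf2zero p, mul_zero]
    have hw0 : ∀ p, cdx η p + I * cdy η p = 0 := by
      intro p
      rw [← E1 p, hf2zero p, mul_zero]
    have hfxy0 : ∀ p, cdx (cdy η) p = 0 := by
      intro p
      have d := D1 p
      rw [hf3zero p, hf2zero p, mul_zero] at d
      have h0 : I * cdx (cdy η) p = 0 := by linear_combination -d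
      exact (mul_eq_zero.mp h0).resolve_left I_ne_zero
    have hyx0 : ∀ p, cdy (cdx η) p = 0 := by
      intro p
      rw [cdy_cdx_comm hη p]
      exact hfxy0 p
    have hconst1 : ∀ p, cdx η p = cdx η (0, 0) :=
      const_of_partials_zero hf1 hf2zero hyx0
    set b := cdx η (0, 0) with hbdef
    have hfyval : ∀ p, cdy η p = I * b := by
      intro p
      have h := hw0 p
      rw [hconst1 p] at h
      linear_combination (-I) * h + cdy η p * I_mul_I
    -- ψ := η - b • tau1 has vanishing partials
    set ψ : ℝ × ℝ → ℂ := fun p => η p - b * tau1 p with hψdef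
    have hτs : ContDiff ℝ (⊤:ℕ∞) (fun q => b * tau1 q) := contDiff_const.mul tau1_smooth
    have hψs : ContDiff ℝ (⊤:ℕ∞) ψ := hη.sub hτs
    have hψx : ∀ p, cdx ψ p = 0 := by
      intro p
      rw [hψdef]
      rw [cdx_sub hη hτs p, cdx_const_mul tau1_smooth b p, cdx_tau1 p, hconst1 p]
      ring
    have hψy : ∀ p, cdy ψ p = 0 := by
      intro p
      rw [hψdef]
      rw [cdy_sub hη hτs p, cdy_const_mul tau1_smooth b p, cdy_tau1 p, hfyval p]
      ring
    refine ⟨ψ (0, 0), b, fun p => ?_⟩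
    have := const_of_partials_zero hψs hψx hψy p
    simp only [hψdef] at this
    linear_combination this
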